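/- There is a group isomorphism from the group with presentation ⟨σ₁, σ₂ ∣ (σ₁σ₂)³ = (σ₂σ₁)³, (σ₁σ₂)³ = 1⟩ (the quotient of the braid group of type G₂ by its center) to the free product ℤ * ℤ/3ℤ which sends σ₁ to x and σ₂ to x⁻¹y, where x denotes the generator of the factor ℤ and y the generator of the factor ℤ/3ℤ. -/

import Mathlib

/-- Relators of the quotient of the braid group of type `G₂` by its center:
`(σ₁σ₂)³(σ₂σ₁)⁻³` and `(σ₁σ₂)³`. -/
def G2QuotRels : Set (FreeGroup (Fin 2)) :=
  { (FreeGroup.of 0 * FreeGroup.of 1) ^ 3 * ((FreeGroup.of 1 * FreeGroup.of 0) ^ 3)⁻¹,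
    (FreeGroup.of 0 * FreeGroup.of 1) ^ 3 }


namespace G2Aux

open Monoid

abbrev PG := PresentedGroup G2QuotRels
abbrev CP := Coprod (Multiplicative ℤ) (Multiplicative (ZMod 3))

abbrev x : CP := Coprod.inl (Multiplicative.ofAdd (1:ℤ))
abbrev y : CP := Coprod.inr (Multiplicative.ofAdd (1:ZMod 3))

def fwdFun : Fin 2 → CP := ![x, x⁻¹ * y]

lemma y3 : y^3 = 1 := by
  rw [y, ← map_pow, ← ofAdd_nsmul, show ((3:ℕ) • (1:ZMod 3)) = 0 by decide, ofAdd_zero,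
    map_one]

lemma fwd_rels : ∀ r ∈ G2QuotRels, FreeGroup.lift fwdFun r = 1 := by
  intro r hr
  have h01 : FreeGroup.lift fwdFun ((FreeGroup.of 0 * FreeGroup.of 1)^3) = 1 := by
    simp [fwdFun, mul_assoc, y3]
  rcases hr with h | h
  · subst h
    have h10 : FreeGroup.lift fwdFun ((FreeGroup.of 1 * FreeGroup.of 0)^3) = 1 := by
      have : (FreeGroup.of 1 * FreeGroup.of 0 : FreeGroup (Fin 2))^3 =
          (FreeGroup.of 1) * (FreeGroup.of 0 * FreeGroup.of 1)^3 * (FreeGroup.of 1)⁻¹ := by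
        simp [pow_succ, mul_assoc]
      rw [this]
      simp only [map_mul, map_inv, h01]
      group
    simp [map_mul, h01, h10]
  · rw [Set.mem_singleton_iff] at h
    subst h; exact h01

def fwd : PG →* CP := PresentedGroup.toGroup fwd_rels

lemma g3 : (PresentedGroup.of 0 * PresentedGroup.of 1 : PG) ^ 3 = 1 := by
  have : (PresentedGroup.of 0 * PresentedGroup.of 1 : PG) ^ 3 =
      PresentedGroup.mk G2QuotRels ((FreeGroup.of 0 * FreeGroup.of 1) ^ 3) := by
    simp [PresentedGroup.of]
  rw [this]
  have hmem : ((FreeGroup.of 0 * FreeGroup.of 1) ^ 3 : FreeGroup (Fin 2)) ∈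
      Subgroup.normalClosure G2QuotRels :=
    Subgroup.subset_normalClosure (by right; rfl)
  exact (QuotientGroup.eq_one_iff _).mpr hmem

def zmodHom : Multiplicative (ZMod 3) →* PG :=
  AddMonoidHom.toMultiplicativeLeft
    (ZMod.lift 3 ⟨zmultiplesHom (Additive PG)
      (Additive.ofMul (PresentedGroup.of 0 * PresentedGroup.of 1)), by
        rw [zmultiplesHom_apply, ← ofMul_zpow,
          show (((3:ℕ):ℤ) : ℤ) = ((3:ℕ):ℤ) from rfl, zpow_natCast, g3, ofMul_one]⟩)

lemma zmodHom_one : zmodHom (Multiplicative.ofAdd (1 : ZMod 3)) =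
    PresentedGroup.of 0 * PresentedGroup.of 1 := by
  rw [zmodHom]
  rw [show (Multiplicative.ofAdd (1 : ZMod 3)) = Multiplicative.ofAdd (((1:ℤ) : ZMod 3)) by
    norm_num]
  rw [AddMonoidHom.toMultiplicativeLeft_apply_apply]
  rw [toAdd_ofAdd, ZMod.lift_coe, zmultiplesHom_apply, one_zsmul, toMul_ofMul]

def bwd : CP →* PG :=
  Coprod.lift (zpowersHom PG (PresentedGroup.of 0)) zmodHom

lemma mzmod_ext {M : Type*} [Monoid M] {f g : Multiplicative (ZMod 3) →* M}
    (h : f (Multiplicative.ofAdd 1) = g (Multiplicative.ofAdd 1)) : f = g := by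
  refine MonoidHom.ext fun m => ?_
  have hm : m = (Multiplicative.ofAdd (1:ZMod 3)) ^ (m.toAdd.val) := by
    rw [← ofAdd_nsmul, nsmul_eq_mul, mul_one, ZMod.natCast_val, ZMod.cast_id, ofAdd_toAdd]
  rw [hm, map_pow, map_pow, h]

lemma fwd_of0 : fwd (PresentedGroup.of 0) = x := by
  simp [fwd, fwdFun]

lemma fwd_of1 : fwd (PresentedGroup.of 1) = x⁻¹ * y := by
  simp [fwd, fwdFun]

lemma bwd_fwd : bwd.comp fwd = MonoidHom.id PG := by
  apply PresentedGroup.ext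
  intro i
  fin_cases i
  · simp [fwd_of0, bwd, x]
  · show bwd (fwd (PresentedGroup.of 1)) = PresentedGroup.of 1
    simp only [fwd_of1, map_mul, map_inv]
    rw [bwd, Coprod.lift_apply_inl, Coprod.lift_apply_inr, zmodHom_one]
    simp [zpowersHom_apply]

lemma fwd_bwd : fwd.comp bwd = MonoidHom.id CP := by
  apply Coprod.hom_ext
  · apply MonoidHom.ext_mint
    simp [bwd, fwd_of0, x]
  · apply mzmod_ext
    simp only [MonoidHom.comp_apply, MonoidHom.id_apply, Coprod.comp_lift]
    rw [bwd, Coprod.lift_apply_inr, zmodHom_one, map_mul, fwd_of0, fwd_of1]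
    simp [x]

end G2Aux



open Monoid in
theorem stmt_5 :
    ∃ e : PresentedGroup G2QuotRels ≃* Coprod (Multiplicative ℤ) (Multiplicative (ZMod 3)),
      e (PresentedGroup.of 0) = Coprod.inl (Multiplicative.ofAdd (1 : ℤ)) ∧
      e (PresentedGroup.of 1) =
        (Coprod.inl (Multiplicative.ofAdd (1 : ℤ)))⁻¹ *
          Coprod.inr (Multiplicative.ofAdd (1 : ZMod 3)) := by
  refine ⟨G2Aux.fwd.toMulEquiv G2Aux.bwd G2Aux.bwd_fwd G2Aux.fwd_bwd, ?_, ?_⟩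
  · exact G2Aux.fwd_of0
  · exact G2Aux.fwd_of1
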